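/- (Optimality, Theorem 1 upper bound) Let r be odd, r' = (r+1)/2, A a set of q adversaries, and for each adversary i a disagreement set D_i with |D_i| ≤ q. Define X_j (for r' ≤ j ≤ r) as the set of r-subsets F for which there exists A' ⊆ A ∩ F with |A'| = j and every member of F \ A' lies in ∩_{i∈A'} D_i. Then |X_j| ≤ C(q,j)·C(q,r-j), and hence |∪_{j=r'}^{r} X_j| ≤ ∑_{j=r'}^{r} C(q,j)·C(q,r-j) ≤ (1/2)·C(2q,r). -/

import Mathlib

open Classical in
/-- Theorem 1 upper bound: with `r` odd, `r' = (r+1)/2`, adversary set `A` of size `q`,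
and disagreement sets `D i` of size at most `q`, the set `X j` of `r`-subsets `F`
admitting a set `A' ⊆ A ∩ F` of `j` active adversaries with `F \ A' ⊆ ∩_{i∈A'} D i`
satisfies `|X j| ≤ C(q,j)·C(q,r-j)`, hence
`|∪_{j=r'}^{r} X j| ≤ ∑_{j=r'}^{r} C(q,j)·C(q,r-j) ≤ (1/2)·C(2q,r)`. -/
theorem stmt_10 (K r q : ℕ) (hodd : Odd r) (A : Finset (Fin K)) (hA : A.card = q)
    (D : Fin K → Finset (Fin K)) (hD : ∀ i ∈ A, (D i).card ≤ q)
    (X : ℕ → Finset (Finset (Fin K)))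
    (hX : ∀ j, X j = ((Finset.univ : Finset (Fin K)).powersetCard r).filter
        (fun F => ∃ A' ∈ (A ∩ F).powersetCard j, ∀ w ∈ F \ A', ∀ i ∈ A', w ∈ D i)) :
    (∀ j ∈ Finset.Icc ((r + 1) / 2) r, (X j).card ≤ q.choose j * q.choose (r - j)) ∧
      ((Finset.Icc ((r + 1) / 2) r).biUnion X).card
        ≤ ∑ j ∈ Finset.Icc ((r + 1) / 2) r, q.choose j * q.choose (r - j) ∧
      2 * ∑ j ∈ Finset.Icc ((r + 1) / 2) r, q.choose j * q.choose (r - j)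
        ≤ (2 * q).choose r := by
  obtain ⟨m, hm⟩ := hodd
  have hpart1 : ∀ j ∈ Finset.Icc ((r + 1) / 2) r, (X j).card ≤ q.choose j * q.choose (r - j) := by
    intro j hj
    rw [Finset.mem_Icc] at hj
    have hj1 : 1 ≤ j := by omega
    set bound : Finset (Finset (Fin K)) :=
      (A.powersetCard j).biUnion (fun A' =>
        if h : A'.Nonempty then ((D h.choose).powersetCard (r - j)).image (fun S => A' ∪ S)
        else ∅) with hbound
    have hsub : X j ⊆ bound := by
      intro F hF
      rw [hX] at hF
      obtain ⟨hF1, A', hA', hw⟩ := Finset.mem_filter.mp hF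
      obtain ⟨-, hFcard⟩ := Finset.mem_powersetCard.mp hF1
      obtain ⟨hA'sub, hA'card⟩ := Finset.mem_powersetCard.mp hA'
      have hA'A : A' ⊆ A := hA'sub.trans (Finset.inter_subset_left)
      have hA'F : A' ⊆ F := hA'sub.trans (Finset.inter_subset_right)
      have hne : A'.Nonempty := Finset.card_pos.mp (by omega)
      refine Finset.mem_biUnion.mpr ⟨A', Finset.mem_powersetCard.mpr ⟨hA'A, hA'card⟩, ?_⟩
      rw [dif_pos hne]
      refine Finset.mem_image.mpr ⟨F \ A', Finset.mem_powersetCard.mpr ⟨?_, ?_⟩, ?_⟩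
      · intro w hw'
        exact hw w hw' hne.choose hne.choose_spec
      · rw [Finset.card_sdiff_of_subset hA'F, hFcard, hA'card]
      · exact Finset.union_sdiff_of_subset hA'F
    calc (X j).card ≤ bound.card := Finset.card_le_card hsub
      _ ≤ ∑ A' ∈ A.powersetCard j,
            (if h : A'.Nonempty then ((D h.choose).powersetCard (r - j)).image (fun S => A' ∪ S)
             else ∅).card := Finset.card_biUnion_le
      _ ≤ ∑ A' ∈ A.powersetCard j, q.choose (r - j) := by
          apply Finset.sum_le_sum
          intro A' hA'
          obtain ⟨hA'A, -⟩ := Finset.mem_powersetCard.mp hA'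
          by_cases h : A'.Nonempty
          · rw [dif_pos h]
            calc (((D h.choose).powersetCard (r - j)).image (fun S => A' ∪ S)).card
                ≤ ((D h.choose).powersetCard (r - j)).card := Finset.card_image_le
              _ = (D h.choose).card.choose (r - j) := Finset.card_powersetCard _ _
              _ ≤ q.choose (r - j) :=
                  Nat.choose_le_choose _ (hD _ (hA'A h.choose_spec))
          · rw [dif_neg h]; exact Nat.zero_le _
      _ = q.choose j * q.choose (r - j) := by
          rw [Finset.sum_const, Finset.card_powersetCard, hA, smul_eq_mul]
  refine ⟨hpart1, ?_, ?_⟩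
  · exact (Finset.card_biUnion_le).trans (Finset.sum_le_sum hpart1)
  · have hr2 : (r + 1) / 2 = m + 1 := by omega
    have hsym : ∑ j ∈ Finset.Icc 0 m, q.choose j * q.choose (r - j)
        = ∑ j ∈ Finset.Icc (m + 1) r, q.choose j * q.choose (r - j) := by
      refine Finset.sum_nbij' (fun j => r - j) (fun j => r - j) ?_ ?_ ?_ ?_ ?_
      · intro j hj; simp only [Finset.mem_Icc] at hj ⊢; omega
      · intro j hj; simp only [Finset.mem_Icc] at hj ⊢; omega
      · intro j hj; simp only [Finset.mem_Icc] at hj; show r - (r - j) = j; omega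
      · intro j hj; simp only [Finset.mem_Icc] at hj; show r - (r - j) = j; omega
      · intro j hj
        simp only [Finset.mem_Icc] at hj
        show q.choose j * q.choose (r - j) = q.choose (r - j) * q.choose (r - (r - j))
        have : r - (r - j) = j := by omega
        rw [this, mul_comm]
    have hvdm : (2 * q).choose r = ∑ j ∈ Finset.range (r + 1), q.choose j * q.choose (r - j) := by
      rw [two_mul, Nat.add_choose_eq]
      exact Finset.Nat.sum_antidiagonal_eq_sum_range_succ_mk _ _
    have hsplit : ∑ j ∈ Finset.range (r + 1), q.choose j * q.choose (r - j)
        = ∑ j ∈ Finset.Icc 0 m, q.choose j * q.choose (r - j)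
          + ∑ j ∈ Finset.Icc (m + 1) r, q.choose j * q.choose (r - j) := by
      rw [Finset.range_eq_Ico, ← Finset.Ico_add_one_right_eq_Icc 0 m, ← Finset.Ico_add_one_right_eq_Icc (m + 1) r,
        Finset.sum_Ico_consecutive _ (by omega) (by omega)]
    rw [hr2, hvdm, hsplit, hsym, two_mul]
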